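/- Let n ≥ 1, ω > 0, x₀ ∈ ℝ^n, and let ψ ∈ L¹(ℝ^n) ∩ L^∞(ℝ^n) satisfy ‖ψ‖_{L^∞} ≤ H and ∫_{ℝ^n} |ψ(x)| |x − x₀|^ω dx ≤ A for some constants H, A > 0. Then ‖ψ‖_{L¹(ℝ^n)} ≤ 2 v_n^{ω/(n+ω)} H^{ω/(n+ω)} A^{n/(n+ω)}, where v_n denotes the Lebesgue measure of the n-dimensional Euclidean unit ball. (This interpolation between the height condition and the concentration condition yields the L¹ control of molecules, equation (CTR_L1) of the paper.) -/

import Mathlib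

open MeasureTheory Metric

/-- `L¹` control of molecules by interpolation between the height
condition `‖ψ‖_{L^∞} ≤ H` and the concentration condition `∫ |ψ(x)| |x-x₀|^ω dx ≤ A`:
`‖ψ‖_{L¹} ≤ 2 v_n^{ω/(n+ω)} H^{ω/(n+ω)} A^{n/(n+ω)}`. -/
theorem statement14
    (n : ℕ) (hn : 1 ≤ n) (ω H A : ℝ) (hω : 0 < ω) (hH : 0 < H) (hA : 0 < A)
    (x₀ : EuclideanSpace ℝ (Fin n)) (ψ : EuclideanSpace ℝ (Fin n) → ℝ)
    (hψ1 : Integrable ψ volume)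
    (hψinf : ∀ᵐ x ∂(volume : Measure (EuclideanSpace ℝ (Fin n))), |ψ x| ≤ H)
    (hconc : ∫⁻ x, ENNReal.ofReal (|ψ x| * ‖x - x₀‖ ^ ω) ≤ ENNReal.ofReal A) :
    (∫ x, |ψ x|) ≤
      2 * (volume (Metric.ball (0 : EuclideanSpace ℝ (Fin n)) 1)).toReal ^ (ω / ((n : ℝ) + ω)) *
        H ^ (ω / ((n : ℝ) + ω)) * A ^ ((n : ℝ) / ((n : ℝ) + ω)) := by
  haveI : Nonempty (Fin n) := ⟨⟨0, hn⟩⟩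
  haveI : Nontrivial (EuclideanSpace ℝ (Fin n)) := by
    refine nontrivial_of_ne 0 (EuclideanSpace.single ⟨0, hn⟩ 1) ?_
    intro h
    have := congrArg (fun w : EuclideanSpace ℝ (Fin n) => w ⟨0, hn⟩) h.symm
    simp [EuclideanSpace.single] at this
  set v : ℝ := (volume (Metric.ball (0 : EuclideanSpace ℝ (Fin n)) 1)).toReal with hv
  have hvpos : 0 < v := by
    apply ENNReal.toReal_pos
    · exact (measure_ball_pos volume 0 one_pos).ne'
    · exact measure_ball_lt_top.ne
  have hnω : (0:ℝ) < (n : ℝ) + ω := by positivity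
  set c : ℝ := A / (H * v) with hc
  have hHv : 0 < H * v := by positivity
  have hcpos : 0 < c := by positivity
  set R : ℝ := c ^ (((n:ℝ) + ω)⁻¹) with hR
  have hRpos : 0 < R := Real.rpow_pos_of_pos hcpos _
  set g : EuclideanSpace ℝ (Fin n) → ℝ := fun x => |ψ x| * ‖x - x₀‖ ^ ω with hg
  have hgnn : ∀ x, 0 ≤ g x := fun x => by positivity
  have hgmeas : AEStronglyMeasurable g volume := by
    exact (hψ1.abs.aestronglyMeasurable).mul
      ((continuous_id.sub continuous_const).norm.rpow_const
        (fun x => Or.inr hω.le)).aestronglyMeasurable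
  have hgint : Integrable g volume := by
    refine ⟨hgmeas, ?_⟩
    rw [hasFiniteIntegral_iff_ofReal (Filter.Eventually.of_forall hgnn)]
    exact lt_of_le_of_lt hconc ENNReal.ofReal_lt_top
  have hgA : ∫ x, g x ≤ A := by
    rw [integral_eq_lintegral_of_nonneg_ae (Filter.Eventually.of_forall hgnn) hgmeas]
    calc (∫⁻ x, ENNReal.ofReal (g x)).toReal ≤ (ENNReal.ofReal A).toReal :=
          ENNReal.toReal_mono ENNReal.ofReal_ne_top hconc
      _ = A := ENNReal.toReal_ofReal hA.le
  set s := Metric.ball x₀ R with hs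
  have hsm : MeasurableSet s := measurableSet_ball
  have hsplit : (∫ x, |ψ x|) = (∫ x in s, |ψ x|) + ∫ x in sᶜ, |ψ x| :=
    (integral_add_compl hsm hψ1.abs).symm
  -- volume of the ball
  have hμs : (volume s).toReal = R ^ ((n : ℝ)) * v := by
    rw [hs, Measure.addHaar_ball volume x₀ hRpos.le, ENNReal.toReal_mul,
      ENNReal.toReal_ofReal (by positivity)]
    congr 1
    rw [finrank_euclideanSpace_fin, ← Real.rpow_natCast R n]
  -- inside bound
  have hin : (∫ x in s, |ψ x|) ≤ H * (R ^ ((n:ℝ)) * v) := by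
    have h1 : (∫ x in s, |ψ x|) ≤ ∫ _x in s, H := by
      apply integral_mono_ae hψ1.abs.restrict
      · exact integrableOn_const measure_ball_lt_top.ne
      · exact ae_restrict_of_ae hψinf
    rw [setIntegral_const] at h1
    rw [← hμs]
    calc (∫ x in s, |ψ x|) ≤ (volume s).toReal • H := h1
      _ = H * (volume s).toReal := by rw [smul_eq_mul]; ring
  -- outside bound
  have hout : (∫ x in sᶜ, |ψ x|) ≤ R ^ (-ω) * A := by
    have h1 : (∫ x in sᶜ, |ψ x|) ≤ ∫ x in sᶜ, R ^ (-ω) * g x := by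
      apply setIntegral_mono_on hψ1.abs.restrict
        (hgint.restrict.const_mul _) hsm.compl
      intro x hx
      have hdist : R ≤ ‖x - x₀‖ := by
        have hx' := hx
        simp only [hs, Set.mem_compl_iff, Metric.mem_ball, not_lt] at hx'
        rwa [show ‖x - x₀‖ = dist x x₀ from (dist_eq_norm x x₀).symm]
      have hRω : R ^ ω ≤ ‖x - x₀‖ ^ ω := Real.rpow_le_rpow hRpos.le hdist hω.le
      have hRωpos : 0 < R ^ ω := Real.rpow_pos_of_pos hRpos _
      show |ψ x| ≤ R ^ (-ω) * (|ψ x| * ‖x - x₀‖ ^ ω)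
      rw [Real.rpow_neg hRpos.le]
      calc |ψ x| = |ψ x| * (R ^ ω) * (R ^ ω)⁻¹ := by field_simp
        _ ≤ |ψ x| * ‖x - x₀‖ ^ ω * (R ^ ω)⁻¹ := by
            apply mul_le_mul_of_nonneg_right _ (by positivity)
            exact mul_le_mul_of_nonneg_left hRω (abs_nonneg _)
        _ = (R ^ ω)⁻¹ * (|ψ x| * ‖x - x₀‖ ^ ω) := by ring
    rw [integral_const_mul] at h1
    refine h1.trans ?_
    apply mul_le_mul_of_nonneg_left _ (by positivity)
    exact le_trans (setIntegral_le_integral hgint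
      (Filter.Eventually.of_forall hgnn)) hgA
  -- arithmetic
  set t : ℝ := ω / ((n:ℝ) + ω) with ht
  set u : ℝ := (n:ℝ) / ((n:ℝ) + ω) with hu
  have htu : t + u = 1 := by
    rw [ht, hu, ← add_div]
    field_simp [add_comm]
    ring
  have hRn : R ^ ((n:ℝ)) = c ^ u := by
    rw [hR, ← Real.rpow_mul hcpos.le]
    congr 1
    rw [hu]; field_simp
  have hRmω : R ^ (-ω) = c ^ (-t) := by
    rw [hR, ← Real.rpow_mul hcpos.le]
    congr 1
    rw [ht]; field_simp
  have hcu : c ^ u = A ^ u / (H * v) ^ u := by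
    rw [hc, Real.div_rpow hA.le hHv.le]
  have hct : c ^ t = A ^ t / (H * v) ^ t := by
    rw [hc, Real.div_rpow hA.le hHv.le]
  have hHv1 : (H * v) ^ t * (H * v) ^ u = H * v := by
    rw [← Real.rpow_add hHv, htu, Real.rpow_one]
  have hA1 : A ^ t * A ^ u = A := by
    rw [← Real.rpow_add hA, htu, Real.rpow_one]
  have hAu : 0 < A ^ u := Real.rpow_pos_of_pos hA _
  have hAt : 0 < A ^ t := Real.rpow_pos_of_pos hA _
  have hHvu : 0 < (H * v) ^ u := Real.rpow_pos_of_pos hHv _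
  have hHvt : 0 < (H * v) ^ t := Real.rpow_pos_of_pos hHv _
  have e1 : H * (R ^ ((n:ℝ)) * v) = (H * v) ^ t * A ^ u := by
    rw [hRn, hcu]
    have h : (H * v) ^ t = (H * v) / (H * v) ^ u := by
      rw [eq_div_iff hHvu.ne']; exact hHv1
    rw [h]
    field_simp
  have e2 : R ^ (-ω) * A = (H * v) ^ t * A ^ u := by
    rw [hRmω, Real.rpow_neg hcpos.le, hct]
    have h : A ^ u = A / A ^ t := by
      rw [eq_div_iff hAt.ne', mul_comm]; exact hA1
    rw [h, inv_div]
    field_simp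
  have e3 : (H * v) ^ t = H ^ t * v ^ t := Real.mul_rpow hH.le hvpos.le
  calc (∫ x, |ψ x|) = (∫ x in s, |ψ x|) + ∫ x in sᶜ, |ψ x| := hsplit
    _ ≤ H * (R ^ ((n:ℝ)) * v) + R ^ (-ω) * A := add_le_add hin hout
    _ = 2 * v ^ t * H ^ t * A ^ u := by rw [e1, e2, e3]; ring
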